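/- Let Γ = (X, 𝒞, O) be a compatibility scenario and B a behavior for Γ. Then B is noncontextual if and only if B is a convex combination of deterministic behaviors: there exist nonnegative weights λ_g, indexed by global assignments g : X → O, with ∑_g λ_g = 1, such that for every context C ∈ 𝒞 and every outcome list a : C → O, B(C)(a) = ∑_{g : X → O, g|_C = a} λ_g. Consequently the set of noncontextual behaviors is the convex hull of the finitely many deterministic behaviors, and in particular is a compact convex subset of the real vector space of all behaviors. -/

import Mathlib

/-- A probability distribution on a finite type `S`. -/
def IsProbDist {S : Type*} [Fintype S] (p : S → ℝ) : Prop :=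
  (∀ s, 0 ≤ p s) ∧ ∑ s, p s = 1

/-- The real vector space of behaviors for the scenario with measurements `X`,
contexts `𝒞` and outcomes `O`: vectors in `∏_{C ∈ 𝒞} ((C → O) → ℝ)`. -/
abbrev BSpace {X : Type*} (𝒞 : Finset (Finset X)) (O : Type*) : Type _ :=
  (C : {C : Finset X // C ∈ 𝒞}) → ({x // x ∈ C.1} → O) → ℝ

/-- A behavior is noncontextual if some probability distribution on global
assignments `X → O` has it as its family of context marginals. -/
def NCbehavior {X O : Type*} [Fintype X] [DecidableEq X] [Fintype O] [DecidableEq O]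
    (𝒞 : Finset (Finset X)) (B : BSpace 𝒞 O) : Prop :=
  ∃ p : (X → O) → ℝ, IsProbDist p ∧
    ∀ (C : {C : Finset X // C ∈ 𝒞}) (f : {x // x ∈ C.1} → O),
      B C f = ∑ g : X → O, if ∀ x : {x // x ∈ C.1}, g x.1 = f x then p g else 0

/-- The deterministic behavior associated with a global assignment `g : X → O`:
each context gets the point distribution concentrated on the restriction of `g`. -/
noncomputable def detB {X O : Type*} [DecidableEq O] (𝒞 : Finset (Finset X)) (g : X → O) :
    BSpace 𝒞 O :=
  fun C f => if ∀ x : {x // x ∈ C.1}, g x.1 = f x then 1 else 0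

lemma sum_smul_detB_apply {X O : Type*} [Fintype X] [DecidableEq X] [Fintype O] [DecidableEq O]
    (𝒞 : Finset (Finset X)) (lam : (X → O) → ℝ)
    (C : {C : Finset X // C ∈ 𝒞}) (f : {x // x ∈ C.1} → O) :
    (∑ g : X → O, lam g • detB 𝒞 g) C f
      = ∑ g : X → O, if ∀ x : {x // x ∈ C.1}, g x.1 = f x then lam g else 0 := by
  rw [Finset.sum_apply, Finset.sum_apply]
  refine Finset.sum_congr rfl fun g _ => ?_
  simp [detB, mul_ite]

lemma nc_iff_comb {X O : Type*} [Fintype X] [DecidableEq X] [Fintype O] [DecidableEq O]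
    (𝒞 : Finset (Finset X)) (B : BSpace 𝒞 O) :
    NCbehavior 𝒞 B ↔ ∃ lam : (X → O) → ℝ,
      (∀ g, 0 ≤ lam g) ∧ (∑ g, lam g) = 1 ∧ B = ∑ g : X → O, lam g • detB 𝒞 g := by
  constructor
  · rintro ⟨p, ⟨hp0, hp1⟩, hB⟩
    refine ⟨p, hp0, hp1, ?_⟩
    funext C f
    rw [hB C f, sum_smul_detB_apply]
  · rintro ⟨lam, h0, h1, hB⟩
    refine ⟨lam, ⟨h0, h1⟩, fun C f => ?_⟩
    rw [hB, sum_smul_detB_apply]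

theorem noncontextual_iff_convex_combination_of_deterministic
    {X O : Type*} [Fintype X] [DecidableEq X] [Fintype O] [DecidableEq O]
    (𝒞 : Finset (Finset X)) (B : BSpace 𝒞 O) :
    (NCbehavior 𝒞 B ↔ ∃ lam : (X → O) → ℝ,
      (∀ g, 0 ≤ lam g) ∧ (∑ g, lam g) = 1 ∧ B = ∑ g : X → O, lam g • detB 𝒞 g) ∧
    {B' : BSpace 𝒞 O | NCbehavior 𝒞 B'} =
      convexHull ℝ (Set.range (detB 𝒞 : (X → O) → BSpace 𝒞 O)) ∧
    Convex ℝ {B' : BSpace 𝒞 O | NCbehavior 𝒞 B'} ∧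
    IsCompact {B' : BSpace 𝒞 O | NCbehavior 𝒞 B'} := by
  have hset : {B' : BSpace 𝒞 O | NCbehavior 𝒞 B'} =
      convexHull ℝ (Set.range (detB 𝒞 : (X → O) → BSpace 𝒞 O)) := by
    apply Set.Subset.antisymm
    · rintro B' hB'
      obtain ⟨lam, h0, h1, hB⟩ := (nc_iff_comb 𝒞 B').mp hB'
      rw [hB, ← Finset.centerMass_eq_of_sum_1 _ _ h1]
      exact Finset.centerMass_mem_convexHull _ (fun g _ => h0 g) (by rw [h1]; norm_num)
        (fun g _ => Set.mem_range_self g)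
    · apply convexHull_min
      · rintro _ ⟨g, rfl⟩
        refine (nc_iff_comb 𝒞 _).mpr ⟨fun h => if h = g then 1 else 0, ?_, ?_, ?_⟩
        · intro h; positivity
        · simp
        · simp [Finset.sum_ite_eq']
      · rintro B1 h1 B2 h2 a b ha hb hab
        obtain ⟨l1, l10, l11, hB1⟩ := (nc_iff_comb 𝒞 B1).mp h1
        obtain ⟨l2, l20, l21, hB2⟩ := (nc_iff_comb 𝒞 B2).mp h2
        refine (nc_iff_comb 𝒞 _).mpr ⟨fun g => a * l1 g + b * l2 g, ?_, ?_, ?_⟩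
        · intro g; have := l10 g; have := l20 g; positivity
        · rw [Finset.sum_add_distrib, ← Finset.mul_sum, ← Finset.mul_sum, l11, l21]
          simpa using hab
        · rw [hB1, hB2, Finset.smul_sum, Finset.smul_sum, ← Finset.sum_add_distrib]
          refine Finset.sum_congr rfl fun g _ => ?_
          rw [smul_smul, smul_smul, ← add_smul]
  refine ⟨nc_iff_comb 𝒞 B, hset, ?_, ?_⟩
  · rw [hset]; exact convex_convexHull ℝ _
  · rw [hset]
    exact (Set.finite_range _).isCompact_convexHull (𝕜 := ℝ)
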